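/- Let B2 be a unital C*-subalgebra of M_N, let B be a unital C*-subalgebra of M_N, and suppose Y(B2;B) = { u ∈ U(M_N) : u*Bu ⊆ B2 } is nonempty. Consider the action of the group Stab(M_N,B) × U(B2) on Y(B2;B) given by (w,v)·u = w u v*, where Stab(M_N,B) = { w ∈ U(M_N) : wBw* = B }. Then this action has only finitely many orbits; more precisely, the map sending the orbit of u to the ∼_{B2}-equivalence class of u*Bu is a well-defined injection from the set of orbits into the (finite) set of ∼_{B2}-equivalence classes of unital C*-subalgebras of B2. -/

import Mathlib

set_option synthInstance.maxHeartbeats 1000000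
set_option maxHeartbeats 1000000

noncomputable section

abbrev MatN (N : ℕ) := Matrix (Fin N) (Fin N) ℂ

/-- `Y(B2;B) = { u ∈ U(M_N) : u* B u ⊆ B2 }`. -/
def Yset {N : ℕ} (B2 B : StarSubalgebra ℂ (MatN N)) : Set (MatN N) :=
  {u | u ∈ unitary (MatN N) ∧ ∀ b ∈ B, star u * b * u ∈ B2}

/-- The orbit relation on `Y(B2;B)` for the action of `Stab(M_N,B) × U(B2)` given by
`(w,v)·u = w u v*`. -/
def orbitRel {N : ℕ} (B2 B : StarSubalgebra ℂ (MatN N)) (u u' : MatN N) : Prop :=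
  ∃ w v : MatN N, w ∈ unitary (MatN N) ∧
    ((fun x => w * x * star w) '' (B : Set (MatN N)) = (B : Set (MatN N))) ∧
    v ∈ unitary (MatN N) ∧ v ∈ B2 ∧ u' = w * u * star v

/-- `∼_{B2}`-equivalence of the subalgebras `u* B u` and `u'* B u'` of `B2`. -/
def imagesEquiv {N : ℕ} (B2 B : StarSubalgebra ℂ (MatN N)) (u u' : MatN N) : Prop :=
  ∃ v : MatN N, v ∈ unitary (MatN N) ∧ v ∈ B2 ∧
    (fun x => v * x * star v) '' ((fun x => star u * x * u) '' (B : Set (MatN N))) =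
      (fun x => star u' * x * u') '' (B : Set (MatN N))

open Matrix Polynomial
open scoped ComplexOrder

/-! ### Generalities on unitaries -/

section unitaries
variable {N : ℕ} {B2 B : StarSubalgebra ℂ (MatN N)}

lemma ucl {a : MatN N} (ha : a ∈ unitary (MatN N)) (m : MatN N) : star a * (a * m) = m := by
  rw [← mul_assoc, (Unitary.mem_iff.mp ha).1, one_mul]

lemma ucl' {a : MatN N} (ha : a ∈ unitary (MatN N)) (m : MatN N) : a * (star a * m) = m := by
  rw [← mul_assoc, (Unitary.mem_iff.mp ha).2, one_mul]

lemma ucr {a : MatN N} (ha : a ∈ unitary (MatN N)) : star a * a = 1 := (Unitary.mem_iff.mp ha).1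
lemma ucr' {a : MatN N} (ha : a ∈ unitary (MatN N)) : a * star a = 1 := (Unitary.mem_iff.mp ha).2

/-! ### Part 1: the orbit relation is equivalent to `∼_{B2}`-equivalence of images -/

lemma orbit_to_images {u u' : MatN N} (hu : u ∈ Yset B2 B)
    (hrel : orbitRel B2 B u u') : imagesEquiv B2 B u u' := by
  obtain ⟨w, v, hw, hwB, hv, hvB2, rfl⟩ := hrel
  refine ⟨v, hv, hvB2, ?_⟩
  rw [Set.image_image]
  ext m
  constructor
  · rintro ⟨b, hb, rfl⟩
    refine ⟨w * b * star w, ?_, ?_⟩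
    · rw [← hwB]; exact ⟨b, hb, rfl⟩
    · simp only [StarMul.star_mul, star_star, mul_assoc]
      rw [ucl hw, ucl hw]
  · rintro ⟨b, hb, rfl⟩
    have hb' : b ∈ (fun x => w * x * star w) '' (B : Set (MatN N)) := by rw [hwB]; exact hb
    obtain ⟨b₀, hb₀, rfl⟩ := hb'
    refine ⟨b₀, hb₀, ?_⟩
    simp only [StarMul.star_mul, star_star, mul_assoc]
    rw [ucl hw, ucl hw]

lemma images_to_orbit {u u' : MatN N} (hu : u ∈ Yset B2 B) (hu' : u' ∈ Yset B2 B)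
    (him : imagesEquiv B2 B u u') : orbitRel B2 B u u' := by
  obtain ⟨v, hv, hvB2, him⟩ := him
  rw [Set.image_image] at him
  refine ⟨u' * v * star u, v, ?_, ?_, hv, hvB2, ?_⟩
  · exact mul_mem (mul_mem hu'.1 hv) (Unitary.star_mem hu.1)
  · ext m
    constructor
    · rintro ⟨b, hb, rfl⟩
      have h1 : v * (star u * b * u) * star v
          ∈ (fun x => star u' * x * u') '' (B : Set (MatN N)) := by
        rw [← him]; exact ⟨b, hb, rfl⟩
      obtain ⟨b', hb', heq⟩ := h1
      dsimp only at heq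
      have h4 : b' = u' * (v * (star u * b * u) * star v) * star u' := by
        rw [← heq]
        simp only [mul_assoc, ucl' hu'.1, ucr' hu'.1, mul_one]
      show u' * v * star u * b * star (u' * v * star u) ∈ (B : Set (MatN N))
      have h5 : u' * v * star u * b * star (u' * v * star u) = b' := by
        rw [h4]
        simp only [StarMul.star_mul, star_star, mul_assoc]
      rw [h5]; exact hb'
    · intro hm
      have h1 : star u' * m * u' ∈ (fun x => star u' * x * u') '' (B : Set (MatN N)) :=
        ⟨m, hm, rfl⟩
      rw [← him] at h1
      obtain ⟨b₀, hb₀, heq⟩ := h1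
      dsimp only at heq
      refine ⟨b₀, hb₀, ?_⟩
      have h4 := congrArg (fun x => u' * x * star u') heq
      simp only [mul_assoc, ucl' hu'.1, ucr' hu'.1, mul_one] at h4
      show u' * v * star u * b₀ * star (u' * v * star u) = m
      simp only [StarMul.star_mul, star_star, mul_assoc]
      exact h4
  · simp only [StarMul.star_mul, star_star, mul_assoc]
    rw [ucl hu.1, ucr' hv, mul_one]

end unitaries

/-! ### The trace-orthogonal conditional expectation onto `B2` -/

def matE (N : ℕ) : MatN N ≃ₗ[ℂ] EuclideanSpace ℂ (Fin N × Fin N) where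
  toFun m := WithLp.toLp 2 (fun p : Fin N × Fin N => m p.1 p.2)
  invFun f := Matrix.of fun i j => f (i, j)
  map_add' _ _ := rfl
  map_smul' _ _ := rfl
  left_inv _ := rfl
  right_inv _ := rfl

lemma inner_matE (N : ℕ) (a b : MatN N) :
    (inner ℂ (matE N a) (matE N b) : ℂ) = Matrix.trace (star a * b) := by
  simp [PiLp.inner_apply, RCLike.inner_apply, Matrix.trace, Matrix.mul_apply,
    Matrix.conjTranspose_apply, Matrix.diag, Fintype.sum_prod_type, matE]
  rw [Finset.sum_comm]
  exact Finset.sum_congr rfl fun _ _ => Finset.sum_congr rfl fun _ _ => mul_comm _ _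

lemma trace_star_flip {N : ℕ} (a b : MatN N) :
    Matrix.trace (star a * b) = star (Matrix.trace (star b * a)) := by
  rw [← Matrix.trace_conjTranspose]
  congr 1
  simp [Matrix.star_eq_conjTranspose, Matrix.conjTranspose_mul]

variable {N : ℕ}

def SB2 (B2 : StarSubalgebra ℂ (MatN N)) : Submodule ℂ (EuclideanSpace ℂ (Fin N × Fin N)) :=
  (Subalgebra.toSubmodule B2.toSubalgebra).map (matE N).toLinearMap

def EL (B2 : StarSubalgebra ℂ (MatN N)) : MatN N →ₗ[ℂ] MatN N :=
  (matE N).symm.toLinearMap ∘ₗ (SB2 B2).subtype ∘ₗ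
    (Submodule.orthogonalProjectionOnto (SB2 B2)).toLinearMap ∘ₗ (matE N).toLinearMap

variable (B2 : StarSubalgebra ℂ (MatN N))

lemma EL_eq (m : MatN N) :
    matE N (EL B2 m)
      = (Submodule.orthogonalProjectionOnto (SB2 B2) (matE N m) : EuclideanSpace ℂ (Fin N × Fin N)) := by
  simp only [EL, LinearMap.comp_apply, LinearEquiv.coe_coe, Submodule.subtype_apply]
  rw [(matE N).apply_symm_apply]
  rfl

lemma EL_mem (m : MatN N) : EL B2 m ∈ B2 := by
  have h : (Submodule.orthogonalProjectionOnto (SB2 B2) (matE N m) : EuclideanSpace ℂ (Fin N × Fin N)) ∈ SB2 B2 :=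
    (Submodule.orthogonalProjectionOnto (SB2 B2) (matE N m)).2
  rw [← EL_eq] at h
  obtain ⟨x, hx, hex⟩ := h
  have : EL B2 m = x := by
    have := congrArg (matE N).symm hex
    simpa using this.symm
  exact this ▸ hx

lemma EL_char (m y : MatN N) (hy : y ∈ B2)
    (horth : ∀ c ∈ B2, Matrix.trace (star c * (m - y)) = 0) : EL B2 m = y := by
  have key : (Submodule.orthogonalProjectionOnto (SB2 B2) (matE N m) : EuclideanSpace ℂ (Fin N × Fin N))
      = matE N y := by
    refine Submodule.eq_starProjection_of_mem_of_inner_eq_zero ⟨y, hy, rfl⟩ ?_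
    rintro w ⟨c, hc, rfl⟩
    rw [← map_sub, LinearEquiv.coe_coe, inner_matE, trace_star_flip]
    rw [horth c hc]
    simp
  have := (EL_eq B2 m).trans key
  exact (matE N).injective this

lemma EL_orth (m : MatN N) : ∀ c ∈ B2, Matrix.trace (star c * (m - EL B2 m)) = 0 := by
  intro c hc
  have h : inner ℂ (matE N m - (Submodule.orthogonalProjectionOnto (SB2 B2) (matE N m) : EuclideanSpace ℂ (Fin N × Fin N))) (matE N c) = 0 :=
    Submodule.starProjection_inner_eq_zero (K := SB2 B2) (matE N m) (matE N c) ⟨c, hc, rfl⟩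
  rw [← EL_eq B2 m, ← map_sub, inner_matE] at h
  rw [trace_star_flip] at h
  have := congrArg star h
  rw [star_star] at this
  simpa using this

lemma EL_of_mem {m : MatN N} (hm : m ∈ B2) : EL B2 m = m :=
  EL_char B2 m m hm (by intro c _; simp)

lemma EL_left {b : MatN N} (hb : b ∈ B2) (m : MatN N) : EL B2 (b * m) = b * EL B2 m := by
  refine EL_char B2 _ _ (mul_mem hb (EL_mem B2 m)) ?_
  intro c hc
  have : star c * (b * m - b * EL B2 m) = star (star b * c) * (m - EL B2 m) := by
    simp [StarMul.star_mul, star_star, mul_sub, mul_assoc]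
  rw [this]
  exact EL_orth B2 m _ (mul_mem (star_mem hb) hc)

lemma EL_right {b : MatN N} (hb : b ∈ B2) (m : MatN N) : EL B2 (m * b) = EL B2 m * b := by
  refine EL_char B2 _ _ (mul_mem (EL_mem B2 m) hb) ?_
  intro c hc
  have : star c * (m * b - EL B2 m * b) = star c * (m - EL B2 m) * b := by
    simp [mul_sub, sub_mul, mul_assoc]
  rw [this, Matrix.trace_mul_comm]
  have : b * (star c * (m - EL B2 m)) = star (c * star b) * (m - EL B2 m) := by
    simp [StarMul.star_mul, star_star, mul_sub, sub_mul, mul_assoc]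
  rw [this]
  exact EL_orth B2 m _ (mul_mem hc (star_mem hb))

lemma EL_star (m : MatN N) : EL B2 (star m) = star (EL B2 m) := by
  refine EL_char B2 _ _ (star_mem (EL_mem B2 m)) ?_
  intro c hc
  have h1 : star c * (star m - star (EL B2 m)) = star ((m - EL B2 m) * c) := by
    simp [StarMul.star_mul, star_sub]
  rw [h1, Matrix.star_eq_conjTranspose, Matrix.trace_conjTranspose, Matrix.trace_mul_comm]
  have h2 := EL_orth B2 m (star c) (star_mem hc)
  rw [star_star] at h2
  rw [h2]
  simp

lemma EL_one : EL B2 (1 : MatN N) = 1 := EL_of_mem B2 (one_mem B2)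

/-! ### Inverse square root of `x* x` as a polynomial in `x* x` -/

lemma commute_aeval {A : Type*} [Semiring A] [Algebra ℂ A] {a b : A}
    (h : Commute a b) (p : ℂ[X]) : Commute a (aeval b p) := by
  induction p using Polynomial.induction_on' with
  | add p q hp hq => rw [map_add]; exact hp.add_right hq
  | monomial n c =>
    rw [aeval_monomial]
    exact (Algebra.commute_algebraMap_right c a).mul_right (h.pow_right n)

lemma aeval_mem_subalgebra {A : Subalgebra ℂ (MatN N)} {a : MatN N} (ha : a ∈ A) (p : ℂ[X]) :
    aeval a p ∈ A := by
  have h0 := Polynomial.aeval_algHom_apply A.val (⟨a, ha⟩ : A) p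
  have h1 : (aeval a p : MatN N) = ((aeval (⟨a, ha⟩ : A) p : A) : MatN N) := h0
  rw [h1]
  exact (aeval (⟨a, ha⟩ : A) p : A).2

lemma exists_invsqrt (x : MatN N) (hx : IsUnit x.det) :
    ∃ (s : MatN N) (p : ℂ[X]), s = aeval (star x * x) p ∧ star s = s ∧
      s * s * (star x * x) = 1 := by
  classical
  set h : MatN N := star x * x with hh
  have hps : h.PosSemidef := by
    rw [hh, Matrix.star_eq_conjTranspose]
    exact Matrix.posSemidef_conjTranspose_mul_self x
  have hherm : h.IsHermitian := hps.1
  set lam := hherm.eigenvalues with hlam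
  have hdet : h.det = ∏ i, (lam i : ℂ) := hherm.det_eq_prod_eigenvalues
  have hdetu : IsUnit h.det := by
    rw [hh, Matrix.star_eq_conjTranspose, Matrix.det_mul, Matrix.det_conjTranspose]
    exact (hx.star).mul hx
  have hlam_ne : ∀ i, lam i ≠ 0 := by
    intro i hi
    rw [hdet] at hdetu
    have := hdetu.ne_zero
    exact this (Finset.prod_eq_zero (Finset.mem_univ i) (by rw [hi]; simp))
  have hlam_pos : ∀ i, 0 < lam i := fun i =>
    lt_of_le_of_ne (hps.eigenvalues_nonneg i) (Ne.symm (hlam_ne i))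
  set nodes : Finset ℂ := Finset.image (fun i => (lam i : ℂ)) Finset.univ with hnodes
  set r : ℂ → ℂ := fun c => ((Real.sqrt c.re)⁻¹ : ℂ) with hr
  set p : ℂ[X] := Lagrange.interpolate nodes id r with hp
  have hinj : Set.InjOn id (nodes : Set ℂ) := Function.injective_id.injOn
  have heval : ∀ i, p.eval (lam i : ℂ) = ((Real.sqrt (lam i))⁻¹ : ℂ) := by
    intro i
    have hmem : (lam i : ℂ) ∈ nodes := Finset.mem_image_of_mem _ (Finset.mem_univ i)
    have := Lagrange.eval_interpolate_at_node r hinj hmem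
    simpa [hr, hp] using this
  set U : MatN N := (hherm.eigenvectorUnitary : MatN N) with hU
  have hUU : star U * U = 1 := by
    have := hherm.eigenvectorUnitary.2
    exact (Unitary.mem_iff.mp this).1
  have hUU' : U * star U = 1 := by
    have := hherm.eigenvectorUnitary.2
    exact (Unitary.mem_iff.mp this).2
  have hspec : h = U * diagonal (RCLike.ofReal ∘ lam) * star U := hherm.spectral_theorem
  set cAE : MatN N ≃ₐ[ℂ] MatN N :=
    { toFun := fun m => U * m * star U
      invFun := fun m => star U * m * U
      left_inv := fun m => by
        calc star U * (U * m * star U) * U = (star U * U) * m * (star U * U) := by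
              noncomm_ring
        _ = m := by rw [hUU]; simp
      right_inv := fun m => by
        calc U * (star U * m * U) * star U = (U * star U) * m * (U * star U) := by
              noncomm_ring
        _ = m := by rw [hUU']; simp
      map_add' := fun a b => by noncomm_ring
      map_mul' := fun a b => by
        calc U * (a * b) * star U = (U * a * star U) * (U * b * star U) := by
              have : U * a * star U * (U * b * star U)
                  = U * a * (star U * U) * b * star U := by noncomm_ring
              rw [this, hUU]; noncomm_ring
        _ = _ := rfl
      commutes' := fun r => by
        simp only [Algebra.algebraMap_eq_smul_one]
        rw [Matrix.mul_smul, mul_one, Matrix.smul_mul, hUU'] } with hcAE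
  set dvec : Fin N → ℂ := RCLike.ofReal ∘ lam with hdvec
  set s : MatN N := aeval h p with hs
  have sform : s = U * diagonal (fun i => ((Real.sqrt (lam i))⁻¹ : ℂ)) * star U := by
    have h1 : h = cAE (diagonal dvec) := hspec
    have h2 : aeval h p = cAE (aeval (diagonal dvec) p) := by
      rw [h1, Polynomial.aeval_algHom_apply]
    have h3 : (diagonal dvec : MatN N) = Matrix.diagonalAlgHom ℂ dvec := rfl
    have h4 : aeval (diagonal dvec : MatN N) p
        = diagonal (Polynomial.aeval dvec p) := by
      rw [h3, Polynomial.aeval_algHom_apply]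
      rfl
    have h5 : Polynomial.aeval dvec p = fun i => ((Real.sqrt (lam i))⁻¹ : ℂ) := by
      funext i
      have h6 := Polynomial.aeval_algHom_apply (Pi.evalAlgHom ℂ (fun _ => ℂ) i) dvec p
      have h7 : (Pi.evalAlgHom ℂ (fun _ => ℂ) i) (Polynomial.aeval dvec p)
          = Polynomial.aeval dvec p i := rfl
      have h8 : (Pi.evalAlgHom ℂ (fun _ => ℂ) i) dvec = dvec i := rfl
      rw [h7] at h6
      rw [← h6, h8]
      have h9 : dvec i = (lam i : ℂ) := rfl
      rw [h9, Polynomial.coe_aeval_eq_eval, heval i]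
    rw [← hs] at h2
    rw [h2, h4, h5]
    rfl
  refine ⟨s, p, by rw [hs, hh], ?_, ?_⟩
  · rw [sform]
    rw [Matrix.star_eq_conjTranspose, Matrix.conjTranspose_mul, Matrix.conjTranspose_mul,
      Matrix.diagonal_conjTranspose]
    have : (star fun i => ((Real.sqrt (lam i))⁻¹ : ℂ)) = fun i => ((Real.sqrt (lam i))⁻¹ : ℂ) := by
      funext i
      simp [Pi.star_apply, ← Complex.ofReal_inv, Complex.conj_ofReal]
    rw [this]
    simp [Matrix.star_eq_conjTranspose, Matrix.conjTranspose_conjTranspose, mul_assoc]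
  · rw [sform, hspec]
    set f : Fin N → ℂ := fun i => ((Real.sqrt (lam i))⁻¹ : ℂ) with hf
    calc (U * diagonal f * star U) * (U * diagonal f * star U)
          * (U * diagonal dvec * star U)
        = U * (diagonal f * (star U * U) * diagonal f * (star U * U)
            * diagonal dvec) * star U := by noncomm_ring
      _ = U * (diagonal f * diagonal f * diagonal dvec) * star U := by
          rw [hUU]; noncomm_ring
      _ = U * diagonal (fun i => f i * f i * (lam i : ℂ)) * star U := by
          rw [Matrix.diagonal_mul_diagonal, Matrix.diagonal_mul_diagonal]
          rfl
      _ = U * 1 * star U := by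
          congr 1
          · congr 1
            have : (fun i => f i * f i * (lam i : ℂ)) = fun _ => (1:ℂ) := by
              funext i
              rw [hf]
              have hpos := hlam_pos i
              have : (Real.sqrt (lam i))⁻¹ * (Real.sqrt (lam i))⁻¹ * lam i = 1 := by
                rw [← mul_inv, Real.mul_self_sqrt (le_of_lt hpos)]
                exact inv_mul_cancel₀ (ne_of_gt hpos)
              show ((Real.sqrt (lam i) : ℂ))⁻¹ * ((Real.sqrt (lam i) : ℂ))⁻¹
                  * ((lam i : ℝ) : ℂ) = 1
              exact_mod_cast congrArg Complex.ofReal this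
            rw [this, Matrix.diagonal_one]
      _ = 1 := by rw [mul_one, hUU']

/-! ### Compactness of `Yset` -/

lemma isCompact_Yset (B2 B : StarSubalgebra ℂ (MatN N)) :
    IsCompact (Yset B2 B) := by
  have hK : IsCompact {m : MatN N | ∀ i j, m i j ∈ Metric.closedBall (0:ℂ) 1} := by
    have h1 : IsCompact (Set.pi Set.univ fun _ : Fin N =>
        (Set.pi Set.univ fun _ : Fin N => Metric.closedBall (0:ℂ) 1)) :=
      isCompact_univ_pi fun _ => isCompact_univ_pi fun _ => isCompact_closedBall 0 1
    have h2 : {m : MatN N | ∀ i j, m i j ∈ Metric.closedBall (0:ℂ) 1}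
        = (Set.pi Set.univ fun _ : Fin N =>
            (Set.pi Set.univ fun _ : Fin N => Metric.closedBall (0:ℂ) 1)) := by
      ext m
      exact ⟨fun h i _ j _ => h i j, fun h i j => h i (Set.mem_univ i) j (Set.mem_univ j)⟩
    rw [h2]
    exact h1
  have hsub : Yset B2 B ⊆ {m : MatN N | ∀ i j, m i j ∈ Metric.closedBall (0:ℂ) 1} := by
    rintro u ⟨hu, -⟩
    intro i j
    have h1 : star u * u = 1 := (Unitary.mem_iff.mp hu).1
    have h2 := congrArg (fun A : MatN N => A j j) h1
    simp only [Matrix.mul_apply, Matrix.conjTranspose_apply, Matrix.one_apply_eq,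
      Matrix.star_apply, RCLike.star_def] at h2
    have h3 : ∀ k, (starRingEnd ℂ) (u k j) * u k j = (Complex.normSq (u k j) : ℂ) := fun k =>
      Complex.normSq_eq_conj_mul_self.symm
    rw [Finset.sum_congr rfl (fun k _ => h3 k)] at h2
    have h4 : (∑ k, Complex.normSq (u k j) : ℝ) = 1 := by
      exact_mod_cast (by push_cast at h2 ⊢; exact_mod_cast h2)
    have h5 : Complex.normSq (u i j) ≤ 1 := by
      rw [← h4]
      exact Finset.single_le_sum (f := fun k => Complex.normSq (u k j))
        (fun k _ => Complex.normSq_nonneg _) (Finset.mem_univ i)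
    simp only [Metric.mem_closedBall, dist_zero_right]
    rw [Complex.norm_def]
    calc Real.sqrt (Complex.normSq (u i j)) ≤ Real.sqrt 1 := Real.sqrt_le_sqrt h5
      _ = 1 := Real.sqrt_one
  have hB2closed : IsClosed (B2 : Set (MatN N)) := by
    have := (Subalgebra.toSubmodule B2.toSubalgebra).closed_of_finiteDimensional
    exact this
  have hclosed : IsClosed (Yset B2 B) := by
    have hc1 : IsClosed {u : MatN N | u ∈ unitary (MatN N)} := by
      have : {u : MatN N | u ∈ unitary (MatN N)}
          = {u : MatN N | star u * u = 1} ∩ {u : MatN N | u * star u = 1} := by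
        ext u; exact Unitary.mem_iff
      rw [this]
      exact ((isClosed_singleton (x := (1 : MatN N))).preimage
          ((continuous_id.matrix_conjTranspose).matrix_mul continuous_id)).inter
        ((isClosed_singleton (x := (1 : MatN N))).preimage
          (continuous_id.matrix_mul continuous_id.matrix_conjTranspose))
    have hc2 : IsClosed {u : MatN N | ∀ b ∈ B, star u * b * u ∈ B2} := by
      have : {u : MatN N | ∀ b ∈ B, star u * b * u ∈ B2}
          = ⋂ b ∈ (B : Set (MatN N)), {u : MatN N | star u * b * u ∈ B2} := by
        ext u; simp
      rw [this]
      refine isClosed_biInter fun b _ => ?_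
      exact hB2closed.preimage
        ((continuous_id.matrix_conjTranspose.matrix_mul continuous_const).matrix_mul continuous_id)
    exact hc1.inter hc2
  exact hK.of_isClosed_subset hclosed hsub

/-! ### The key perturbation lemma -/

lemma key_perturb {B2 B : StarSubalgebra ℂ (MatN N)} {t u : MatN N}
    (ht : t ∈ Yset B2 B) (hu : u ∈ Yset B2 B)
    (hdet : IsUnit (EL B2 (star t * u)).det) : imagesEquiv B2 B t u := by
  set z : MatN N := star t * u with hz
  set x : MatN N := EL B2 z with hxdef
  have hxB2 : x ∈ B2 := EL_mem B2 z
  -- intertwining relations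
  have czd : ∀ b ∈ B, (star t * b * t) * z = z * (star u * b * u) := by
    intro b hb
    rw [hz]
    simp only [mul_assoc]
    rw [ucl' ht.1, ucl' hu.1]
  have cx : ∀ b ∈ B, (star t * b * t) * x = x * (star u * b * u) := by
    intro b hb
    rw [hxdef, ← EL_left B2 (ht.2 b hb), czd b hb, EL_right B2 (hu.2 b hb)]
  have xc : ∀ b ∈ B, star x * (star t * b * t) = (star u * b * u) * star x := by
    intro b hb
    have h1 := congrArg star (cx (star b) (star_mem hb))
    simp only [StarMul.star_mul, star_star, mul_assoc] at h1
    simp only [mul_assoc]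
    exact h1
  have hcomm : ∀ b ∈ B, Commute (star u * b * u) (star x * x) := by
    intro b hb
    show (star u * b * u) * (star x * x) = (star x * x) * (star u * b * u)
    calc (star u * b * u) * (star x * x) = ((star u * b * u) * star x) * x :=
          (mul_assoc _ _ _).symm
      _ = (star x * (star t * b * t)) * x := by rw [← xc b hb]
      _ = star x * ((star t * b * t) * x) := mul_assoc _ _ _
      _ = star x * (x * (star u * b * u)) := by rw [cx b hb]
      _ = (star x * x) * (star u * b * u) := (mul_assoc _ _ _).symm
  obtain ⟨s, p, hsp, hsstar, hss⟩ := exists_invsqrt x hdet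
  have hhB2 : star x * x ∈ B2 := mul_mem (star_mem hxB2) hxB2
  have hsB2 : s ∈ B2 := by
    rw [hsp]
    exact aeval_mem_subalgebra (A := B2.toSubalgebra) hhB2 p
  have scomm : ∀ b ∈ B, Commute (star u * b * u) s := fun b hb =>
    hsp ▸ commute_aeval (hcomm b hb) p
  have shcomm : Commute s (star x * x) :=
    (hsp ▸ commute_aeval (Commute.refl (star x * x)) p).symm
  set v : MatN N := x * s with hvdef
  have hvB2 : v ∈ B2 := mul_mem hxB2 hsB2
  have hvv : star v * v = 1 := by
    rw [hvdef]
    calc star (x * s) * (x * s) = star s * (star x * x) * s := by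
          rw [StarMul.star_mul]; noncomm_ring
      _ = s * (star x * x) * s := by rw [hsstar]
      _ = (star x * x) * s * s := by rw [shcomm.eq]
      _ = (star x * x) * (s * s) := by rw [mul_assoc]
      _ = (s * s) * (star x * x) := ((shcomm.mul_left shcomm).symm.eq)
      _ = 1 := hss
  have hvu : v ∈ unitary (MatN N) := Unitary.mem_iff.mpr ⟨hvv, mul_eq_one_comm.mp hvv⟩
  have hxinv : IsUnit x.det := hdet
  have ss_inv : s * s = (star x * x)⁻¹ := (Matrix.inv_eq_left_inv hss).symm
  have xhx : x * ((star x * x)⁻¹ * star x) = 1 := by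
    rw [Matrix.mul_inv_rev]
    have hstarinv : IsUnit (star x).det := by
      rw [Matrix.star_eq_conjTranspose, Matrix.det_conjTranspose]
      exact hxinv.star
    calc x * (x⁻¹ * (star x)⁻¹ * star x) = x * (x⁻¹ * ((star x)⁻¹ * star x)) := by
          rw [mul_assoc]
      _ = x * (x⁻¹ * 1) := by rw [Matrix.nonsing_inv_mul _ hstarinv]
      _ = 1 := by rw [mul_one, Matrix.mul_nonsing_inv _ hxinv]
  have keyid : ∀ b ∈ B, v * (star u * b * u) * star v = star t * b * t := by
    intro b hb
    have hsv : star v = s * star x := by rw [hvdef, StarMul.star_mul, hsstar]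
    calc v * (star u * b * u) * star v = x * (s * (star u * b * u)) * (s * star x) := by
          rw [hvdef, hsv]; noncomm_ring
      _ = x * ((star u * b * u) * s) * (s * star x) := by rw [(scomm b hb).symm.eq]
      _ = (x * (star u * b * u)) * (s * s) * star x := by noncomm_ring
      _ = ((star t * b * t) * x) * (s * s) * star x := by rw [← cx b hb]
      _ = (star t * b * t) * (x * ((star x * x)⁻¹ * star x)) := by
          rw [ss_inv]; noncomm_ring
      _ = star t * b * t := by rw [xhx, mul_one]
  refine ⟨star v, Unitary.star_mem hvu, star_mem hvB2, ?_⟩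
  rw [Set.image_image]
  have hvcancel : ∀ m : MatN N, star v * (v * m) = m := fun m => by
    rw [← mul_assoc, hvv, one_mul]
  refine Set.image_congr ?_
  intro b hb
  have h1 := congrArg (fun m => star v * m * v) (keyid b hb)
  rw [star_star]
  rw [← h1]
  simp only [mul_assoc, hvcancel]
  rw [hvv, mul_one]

/-! ### Main theorem -/

/-- The action of `Stab(M_N,B) × U(B2)` on `Y(B2;B)` has finitely many orbits: the map
sending the orbit of `u` to the `∼_{B2}`-class of `u* B u` is a well-defined injection into
the finite set of `∼_{B2}`-classes of unital C*-subalgebras of `B2`. -/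
theorem finitely_many_orbits_on_Y (N : ℕ) (hN : 0 < N)
    (B2 B : StarSubalgebra ℂ (MatN N)) (hY : (Yset B2 B).Nonempty) :
    (∀ u ∈ Yset B2 B, ∀ u' ∈ Yset B2 B,
      (orbitRel B2 B u u' ↔ imagesEquiv B2 B u u')) ∧
    ∃ T : Finset (MatN N), (T : Set (MatN N)) ⊆ Yset B2 B ∧
      ∀ u ∈ Yset B2 B, ∃ t ∈ T, orbitRel B2 B t u := by
  constructor
  · intro u hu u' hu'
    exact ⟨orbit_to_images hu, images_to_orbit hu hu'⟩
  · classical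
    set O : MatN N → Set (MatN N) := fun t => {m | (EL B2 (star t * m)).det ≠ 0} with hO
    have hOopen : ∀ t : MatN N, IsOpen (O t) := by
      intro t
      have hcont : Continuous fun m : MatN N => (EL B2 (star t * m)).det := by
        refine Continuous.matrix_det ?_
        exact (EL B2).continuous_of_finiteDimensional.comp
          (continuous_const.matrix_mul continuous_id)
      exact isOpen_compl_singleton.preimage hcont
    have hcover : Yset B2 B ⊆ ⋃ t : (Yset B2 B), O (t : MatN N) := by
      intro u hu
      refine Set.mem_iUnion.mpr ⟨⟨u, hu⟩, ?_⟩
      show (EL B2 (star u * u)).det ≠ 0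
      rw [ucr hu.1, EL_one]
      simp
    obtain ⟨I, hI⟩ := (isCompact_Yset B2 B).elim_finite_subcover
      (fun t : (Yset B2 B) => O (t : MatN N)) (fun t => hOopen t) hcover
    refine ⟨I.image Subtype.val, ?_, ?_⟩
    · intro m hm
      rw [Finset.coe_image] at hm
      obtain ⟨t₀, -, rfl⟩ := hm
      exact t₀.2
    · intro u hu
      have := hI hu
      rw [Set.mem_iUnion₂] at this
      obtain ⟨t₀, htI, htO⟩ := this
      refine ⟨(t₀ : MatN N), Finset.mem_image_of_mem Subtype.val htI, ?_⟩
      have hdet : IsUnit (EL B2 (star (t₀ : MatN N) * u)).det := by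
        exact isUnit_iff_ne_zero.mpr htO
      exact images_to_orbit t₀.2 hu (key_perturb t₀.2 hu hdet)
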